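/- Let f : ℝⁿ × ℝᵐ → ℝⁿ and φ : ℝⁿ × ℝᵐ → ℝᵐ be twice continuously differentiable, and fix q₀ ∈ ℝⁿ and p₀ ∈ ℝⁿ. Define Ψ : ℝᵐ × ℝᵐ → ℝᵐ × ℝᵐ by Ψ(u,λ) = ( φ(q₀,u), D_uf(q₀,u)ᵀ p₀ + D_uφ(q₀,u)ᵀ λ ). If the matrix D_uφ(q₀,u₀) is invertible, then for every λ₀ ∈ ℝᵐ the Fréchet derivative DΨ(u₀,λ₀) is a linear isomorphism of ℝᵐ × ℝᵐ. (Consequently, if the semi-explicit DAE q̇ = f(q,u), 0 = φ(q,u) has index 1, then its adjoint DAE system has index 1 with dynamical variables (q,p) and algebraic variables (u,λ).) -/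

import Mathlib

open scoped RealInnerProductSpace

noncomputable section

abbrev Euc (n : ℕ) : Type := EuclideanSpace ℝ (Fin n)

/-- Partial Jacobian `D_qF(q,u)` with respect to the first argument. -/
noncomputable def Dq {n m k : ℕ} (F : Euc n × Euc m → Euc k) (q : Euc n) (u : Euc m) :
    Euc n →L[ℝ] Euc k :=
  fderiv ℝ (fun q' => F (q', u)) q

/-- Partial Jacobian `D_uF(q,u)` with respect to the second argument. -/
noncomputable def Du {n m k : ℕ} (F : Euc n × Euc m → Euc k) (q : Euc n) (u : Euc m) :
    Euc m →L[ℝ] Euc k :=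
  fderiv ℝ (fun u' => F (q, u')) u

/-- `D_qF(q,u)ᵀ`, the transpose (adjoint) of the partial Jacobian in `q`. -/
noncomputable def DqT {n m k : ℕ} (F : Euc n × Euc m → Euc k) (q : Euc n) (u : Euc m) :
    Euc k →L[ℝ] Euc n :=
  ContinuousLinearMap.adjoint (Dq F q u)

/-- `D_uF(q,u)ᵀ`, the transpose (adjoint) of the partial Jacobian in `u`. -/
noncomputable def DuT {n m k : ℕ} (F : Euc n × Euc m → Euc k) (q : Euc n) (u : Euc m) :
    Euc k →L[ℝ] Euc m :=
  ContinuousLinearMap.adjoint (Du F q u)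

/-- Partial gradient `∇_qL(q,u)`. -/
noncomputable def gradQ {n m : ℕ} (L : Euc n × Euc m → ℝ) (q : Euc n) (u : Euc m) : Euc n :=
  gradient (fun q' => L (q', u)) q

/-- Partial gradient `∇_uL(q,u)`. -/
noncomputable def gradU {n m : ℕ} (L : Euc n × Euc m → ℝ) (q : Euc n) (u : Euc m) : Euc m :=
  gradient (fun u' => L (q, u')) u

noncomputable def adjLM (k l : ℕ) : (Euc k →L[ℝ] Euc l) →ₗ[ℝ] (Euc l →L[ℝ] Euc k) where
  toFun := ContinuousLinearMap.adjoint
  map_add' T S := by simp [map_add]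
  map_smul' c T := by
    simp only [RingHom.id_apply]
    rw [map_smulₛₗ]
    simp

noncomputable def adjCLM (k l : ℕ) : (Euc k →L[ℝ] Euc l) →L[ℝ] (Euc l →L[ℝ] Euc k) :=
  (adjLM k l).mkContinuous 1 fun T => by
    rw [one_mul]
    exact le_of_eq (ContinuousLinearMap.adjoint.norm_map T)

@[simp] lemma adjCLM_apply {k l : ℕ} (T : Euc k →L[ℝ] Euc l) :
    adjCLM k l T = ContinuousLinearMap.adjoint T := rfl

/-- if `D_uφ(q₀,u₀)` is invertible (index 1), then the derivative of the
constraint map `Ψ(u,λ) = (φ(q₀,u), D_uf(q₀,u)ᵀ p₀ + D_uφ(q₀,u)ᵀ λ)` of the adjoint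
DAE system is a linear isomorphism of `ℝᵐ × ℝᵐ` at every `(u₀, l₀)`. -/
theorem adjoint_DAE_index_one {n m : ℕ}
    (f : Euc n × Euc m → Euc n) (φ : Euc n × Euc m → Euc m)
    (hf : ContDiff ℝ 2 f) (hφ : ContDiff ℝ 2 φ)
    (q₀ p₀ : Euc n) (u₀ : Euc m)
    (hinv : Function.Bijective (Du φ q₀ u₀)) :
    ∀ l₀ : Euc m,
      Function.Bijective
        (fderiv ℝ (fun w : Euc m × Euc m =>
          ((φ (q₀, w.1), DuT f q₀ w.1 p₀ + DuT φ q₀ w.1 w.2) : Euc m × Euc m))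
          (u₀, l₀)) := by
  intro l₀
  -- slices are C²
  have hφs : ContDiff ℝ 2 (fun u : Euc m => φ (q₀, u)) :=
    hφ.comp (contDiff_const.prodMk contDiff_id)
  have hfs : ContDiff ℝ 2 (fun u : Euc m => f (q₀, u)) :=
    hf.comp (contDiff_const.prodMk contDiff_id)
  -- the partial Jacobians are differentiable in u
  have hDφ : Differentiable ℝ (fun u : Euc m => Du φ q₀ u) :=
    (hφs.fderiv_right (m := 1) le_rfl).differentiable one_ne_zero
  have hDf : Differentiable ℝ (fun u : Euc m => Du f q₀ u) :=
    (hfs.fderiv_right (m := 1) le_rfl).differentiable one_ne_zero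
  -- so are their adjoints
  have hDfT : DifferentiableAt ℝ (fun u : Euc m => DuT f q₀ u) u₀ :=
    ((adjCLM m n).differentiableAt).comp u₀ (hDf u₀)
  have hDφT : DifferentiableAt ℝ (fun u : Euc m => DuT φ q₀ u) u₀ :=
    ((adjCLM m m).differentiableAt).comp u₀ (hDφ u₀)
  have hgd : DifferentiableAt ℝ (fun u : Euc m => DuT f q₀ u p₀) u₀ :=
    hDfT.clm_apply (differentiableAt_const p₀)
  -- names
  set A : Euc m →L[ℝ] Euc m := Du φ q₀ u₀ with hAdef
  set B : Euc m →L[ℝ] Euc m := DuT φ q₀ u₀ with hBdef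
  set Cg : Euc m →L[ℝ] Euc m := fderiv ℝ (fun u : Euc m => DuT f q₀ u p₀) u₀ with hCgdef
  set CB : Euc m →L[ℝ] (Euc m →L[ℝ] Euc m) :=
    fderiv ℝ (fun u : Euc m => DuT φ q₀ u) u₀ with hCBdef
  -- derivative of the map
  have h1 : HasFDerivAt (fun w : Euc m × Euc m => φ (q₀, w.1))
      (A.comp (ContinuousLinearMap.fst ℝ (Euc m) (Euc m))) (u₀, l₀) :=
    ((hφs.differentiable two_ne_zero u₀).hasFDerivAt).comp (f := @Prod.fst (Euc m) (Euc m)) (u₀, l₀) hasFDerivAt_fst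
  have h2a : HasFDerivAt (fun w : Euc m × Euc m => DuT f q₀ w.1 p₀)
      (Cg.comp (ContinuousLinearMap.fst ℝ (Euc m) (Euc m))) (u₀, l₀) :=
    hgd.hasFDerivAt.comp (f := @Prod.fst (Euc m) (Euc m)) (u₀, l₀) hasFDerivAt_fst
  have h2b : HasFDerivAt (fun w : Euc m × Euc m => DuT φ q₀ w.1)
      (CB.comp (ContinuousLinearMap.fst ℝ (Euc m) (Euc m))) (u₀, l₀) :=
    hDφT.hasFDerivAt.comp (f := @Prod.fst (Euc m) (Euc m)) (u₀, l₀) hasFDerivAt_fst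
  have hT := h1.prodMk (h2a.add (h2b.clm_apply hasFDerivAt_snd))
  rw [HasFDerivAt.fderiv (f := fun w : Euc m × Euc m =>
    ((φ (q₀, w.1), DuT f q₀ w.1 p₀ + DuT φ q₀ w.1 w.2) : Euc m × Euc m)) hT]
  -- B is bijective
  set e : Euc m ≃L[ℝ] Euc m :=
    (LinearEquiv.ofBijective (A : Euc m →ₗ[ℝ] Euc m) hinv).toContinuousLinearEquiv with hedef
  have heA : ∀ x, A x = e x := fun x => by rw [hedef]; rfl
  have hA1 : A.comp (e.symm : Euc m →L[ℝ] Euc m) = ContinuousLinearMap.id ℝ (Euc m) := by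
    refine ContinuousLinearMap.ext fun x => ?_
    simp [heA (e.symm x)]
  have hA2 : (e.symm : Euc m →L[ℝ] Euc m).comp A = ContinuousLinearMap.id ℝ (Euc m) := by
    refine ContinuousLinearMap.ext fun x => ?_
    rw [ContinuousLinearMap.comp_apply, heA x]
    simp
  set S : Euc m →L[ℝ] Euc m :=
    ContinuousLinearMap.adjoint (e.symm : Euc m →L[ℝ] Euc m) with hSdef
  have hSB : S.comp B = ContinuousLinearMap.id ℝ (Euc m) := by
    rw [hSdef, hBdef]
    unfold DuT
    rw [← ContinuousLinearMap.adjoint_comp, hA1, ContinuousLinearMap.adjoint_id]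
  have hBS : B.comp S = ContinuousLinearMap.id ℝ (Euc m) := by
    rw [hSdef, hBdef]
    unfold DuT
    rw [← ContinuousLinearMap.adjoint_comp, hA2, ContinuousLinearMap.adjoint_id]
  have hBinj : Function.Injective B := by
    intro a b hab
    have := congrArg (fun T : Euc m →L[ℝ] Euc m => T a) hSB
    have h2 := congrArg (fun T : Euc m →L[ℝ] Euc m => T b) hSB
    simp only [ContinuousLinearMap.comp_apply, ContinuousLinearMap.id_apply] at this h2
    rw [← this, ← h2, hab]
  have hBsurj : Function.Surjective B := fun y => by
    refine ⟨S y, ?_⟩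
    have := congrArg (fun T : Euc m →L[ℝ] Euc m => T y) hBS
    simpa using this
  -- pointwise formula for the derivative
  constructor
  · intro x y hxy
    have hx1 := congrArg Prod.fst hxy
    have hx2 := congrArg Prod.snd hxy
    simp only [ContinuousLinearMap.prod_apply, ContinuousLinearMap.comp_apply,
      ContinuousLinearMap.add_apply, ContinuousLinearMap.coe_fst',
      ContinuousLinearMap.coe_snd', ContinuousLinearMap.flip_apply] at hx1 hx2
    have hxy1 : x.1 = y.1 := hinv.1 hx1
    have hxy2 : x.2 = y.2 := by
      rw [hxy1] at hx2
      have h3 : B x.2 = B y.2 := add_right_cancel (add_left_cancel hx2)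
      exact hBinj h3
    exact Prod.ext hxy1 hxy2
  · intro z
    obtain ⟨a, ha⟩ := hinv.2 z.1
    obtain ⟨b, hb⟩ := hBsurj (z.2 - (Cg a + CB a l₀))
    refine ⟨(a, b), ?_⟩
    simp only [ContinuousLinearMap.prod_apply, ContinuousLinearMap.comp_apply,
      ContinuousLinearMap.add_apply, ContinuousLinearMap.coe_fst',
      ContinuousLinearMap.coe_snd', ContinuousLinearMap.flip_apply]
    rw [hb]
    refine Prod.ext ?_ ?_
    · exact ha
    · simp
      abel


end
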